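/- For every positive integer n and every real x > 1/2, the limit as n → ∞ of 2^{−n x/2 − 2^{−n}} · (2^n x − 1)^{2^{−n}} · exp(2^{−n} · log Γ((2^n x − 1)/2)) equals (2e)^{−x/2} · x^{x/2}. -/

import Mathlib

open Real Filter
open Topology

noncomputable def aN (n : ℕ) : ℝ := (2:ℝ)^(-(n:ℝ))
noncomputable def tN (x : ℝ) (n : ℕ) : ℝ := ((2:ℝ)^n * x - 1)/2
noncomputable def dN (x : ℝ) (n : ℕ) : ℝ :=
  Real.log (Real.Gamma (tN x n)) / tN x n - Real.log (tN x n) + 1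
noncomputable def LN (x : ℝ) (n : ℕ) : ℝ :=
  (n:ℝ) * aN n / 2 * Real.log 2 - aN n * Real.log 2 + aN n * Real.log (x - aN n)
    + ((x - aN n)/2) * (Real.log (x - aN n) - Real.log 2 - 1 + dN x n)

lemma log_factorial_bound : ∃ C : ℝ, ∀ m : ℕ, 1 ≤ m →
    |Real.log (m.factorial) - ((m:ℝ) * Real.log m - m)| ≤ C + Real.log (2 * m) := by
  obtain ⟨a, ha0, ha⟩ := Stirling.stirlingSeq'_bounded_by_pos_constant
  refine ⟨|Real.log a| + |Real.log (Stirling.stirlingSeq 1)|, fun m hm => ?_⟩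
  match m, hm with
  | (k+1), _ =>
  have hm0 : (0:ℝ) < (k+1:ℕ) := by positivity
  have hfor := Stirling.log_stirlingSeq_formula (k+1)
  have hlogdiv : Real.log ((k+1:ℕ) / Real.exp 1) = Real.log (k+1:ℕ) - 1 := by
    rw [Real.log_div (ne_of_gt hm0) (Real.exp_ne_zero 1), Real.log_exp]
  have hkey : Real.log ((k+1).factorial) - (((k+1:ℕ):ℝ) * Real.log (k+1:ℕ) - ((k+1:ℕ):ℝ))
      = Real.log (Stirling.stirlingSeq (k+1)) + 1/2 * Real.log (2 * (k+1:ℕ)) := by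
    rw [hfor, hlogdiv]; ring
  have hsle : Stirling.stirlingSeq (k+1) ≤ Stirling.stirlingSeq 1 :=
    Stirling.stirlingSeq'_antitone (Nat.zero_le k)
  have hsge : a ≤ Stirling.stirlingSeq (k+1) := ha k
  have habs : |Real.log (Stirling.stirlingSeq (k+1))| ≤
      |Real.log a| + |Real.log (Stirling.stirlingSeq 1)| := by
    rw [abs_le]
    constructor
    · have h1 : Real.log a ≤ Real.log (Stirling.stirlingSeq (k+1)) :=
        Real.log_le_log ha0 hsge
      have := neg_abs_le (Real.log a)
      have := abs_nonneg (Real.log (Stirling.stirlingSeq 1))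
      linarith
    · have h1 : Real.log (Stirling.stirlingSeq (k+1)) ≤ Real.log (Stirling.stirlingSeq 1) :=
        Real.log_le_log (lt_of_lt_of_le ha0 hsge) hsle
      have := le_abs_self (Real.log (Stirling.stirlingSeq 1))
      have := abs_nonneg (Real.log a)
      linarith
  have hlog2m : 0 ≤ Real.log (2 * ((k+1:ℕ):ℝ)) := by
    apply Real.log_nonneg
    have : (1:ℝ) ≤ ((k+1:ℕ):ℝ) := by exact_mod_cast Nat.one_le_iff_ne_zero.mpr (Nat.succ_ne_zero k)
    linarith
  calc |Real.log ((k+1).factorial) - (((k+1:ℕ):ℝ) * Real.log (k+1:ℕ) - ((k+1:ℕ):ℝ))|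
      = |Real.log (Stirling.stirlingSeq (k+1)) + 1/2 * Real.log (2 * (k+1:ℕ))| := by rw [hkey]
    _ ≤ |Real.log (Stirling.stirlingSeq (k+1))| + |1/2 * Real.log (2 * (k+1:ℕ))| := abs_add_le _ _
    _ ≤ (|Real.log a| + |Real.log (Stirling.stirlingSeq 1)|) + Real.log (2 * (k+1:ℕ)) := by
        have : |1/2 * Real.log (2 * ((k+1:ℕ):ℝ))| = 1/2 * Real.log (2 * ((k+1:ℕ):ℝ)) := by
          rw [abs_of_nonneg]; positivity
        rw [this]; linarith
    _ = _ := rfl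

lemma gamma_log_bound : ∃ K : ℝ, ∀ t : ℝ, 2 ≤ t →
    |Real.log (Real.Gamma t) - (t * Real.log t - t)| ≤ K + 3 * Real.log t := by
  obtain ⟨C, hC⟩ := log_factorial_bound
  refine ⟨C + Real.log 2 + 3, fun t ht => ?_⟩
  set m := ⌊t⌋₊ with hmdef
  have ht0 : (0:ℝ) < t := by linarith
  have hm2 : 2 ≤ m := Nat.le_floor (by exact_mod_cast ht)
  have hmt : (m:ℝ) ≤ t := Nat.floor_le (le_of_lt ht0)
  have htm : t < (m:ℝ) + 1 := Nat.lt_floor_add_one t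
  have hm0 : (0:ℝ) < (m:ℝ) := by
    have : (2:ℝ) ≤ (m:ℝ) := by exact_mod_cast hm2
    linarith
  have hlogt0 : 0 ≤ Real.log t := Real.log_nonneg (by linarith)
  have hlogm0 : 0 ≤ Real.log (m:ℝ) := Real.log_nonneg (by
    have : (2:ℝ) ≤ (m:ℝ) := by exact_mod_cast hm2
    linarith)
  have hlogmt : Real.log (m:ℝ) ≤ Real.log t := Real.log_le_log hm0 hmt
  -- Gamma values at integers
  have hGm1 : Real.Gamma ((m:ℝ)+1) = m.factorial := Real.Gamma_nat_eq_factorial m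
  have hGm : Real.Gamma (m:ℝ) = (m.factorial : ℝ) / m := by
    have h := Real.Gamma_add_one (ne_of_gt hm0)
    rw [hGm1] at h
    field_simp [ne_of_gt hm0] at h ⊢
    linarith [h]
  -- monotonicity
  have hmem1 : (m:ℝ) ∈ Set.Ici (2:ℝ) := by
    simp only [Set.mem_Ici]; exact_mod_cast hm2
  have hmem2 : t ∈ Set.Ici (2:ℝ) := ht
  have hmem3 : (m:ℝ)+1 ∈ Set.Ici (2:ℝ) := by
    simp only [Set.mem_Ici]; linarith [hmem1.out]
  have hlo : Real.Gamma (m:ℝ) ≤ Real.Gamma t :=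
    Real.Gamma_strictMonoOn_Ici.monotoneOn hmem1 hmem2 hmt
  have hhi : Real.Gamma t ≤ Real.Gamma ((m:ℝ)+1) :=
    Real.Gamma_strictMonoOn_Ici.monotoneOn hmem2 hmem3 (le_of_lt htm)
  have hGt0 : 0 < Real.Gamma t := Real.Gamma_pos_of_pos ht0
  have hfac0 : (0:ℝ) < m.factorial := by exact_mod_cast Nat.factorial_pos m
  -- log bounds
  have hlogGamma_hi : Real.log (Real.Gamma t) ≤ Real.log (m.factorial) := by
    rw [← hGm1] at *
    exact Real.log_le_log hGt0 hhi
  have hlogGamma_lo : Real.log (m.factorial) - Real.log (m:ℝ) ≤ Real.log (Real.Gamma t) := by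
    have h1 : Real.log (Real.Gamma (m:ℝ)) ≤ Real.log (Real.Gamma t) :=
      Real.log_le_log (by rw [hGm]; positivity) hlo
    rw [hGm, Real.log_div (ne_of_gt hfac0) (ne_of_gt hm0)] at h1
    exact h1
  have A1 : |Real.log (Real.Gamma t) - Real.log (m.factorial)| ≤ Real.log t := by
    rw [abs_le]
    constructor
    · linarith
    · linarith
  have A2 : |Real.log (m.factorial) - ((m:ℝ) * Real.log m - m)| ≤ C + Real.log 2 + Real.log t := by
    have h := hC m (by omega)
    have h2 : Real.log (2 * (m:ℝ)) = Real.log 2 + Real.log (m:ℝ) :=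
      Real.log_mul (by norm_num) (ne_of_gt hm0)
    rw [h2] at h
    linarith
  have A3 : |((m:ℝ) * Real.log m - m) - (t * Real.log t - t)| ≤ Real.log t + 2 := by
    have e1 : (m:ℝ) * Real.log m ≤ t * Real.log t := by
      have : (m:ℝ) * Real.log m ≤ t * Real.log m :=
        mul_le_mul_of_nonneg_right hmt hlogm0
      have h2 : t * Real.log m ≤ t * Real.log t :=
        mul_le_mul_of_nonneg_left hlogmt (le_of_lt ht0)
      linarith
    have e2 : t * Real.log t - (m:ℝ) * Real.log m ≤ Real.log t + 1 := by
      have hsplit : t * Real.log t - (m:ℝ) * Real.log m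
          = (t - m) * Real.log t + (m:ℝ) * (Real.log t - Real.log m) := by ring
      have b1 : (t - m) * Real.log t ≤ 1 * Real.log t :=
        mul_le_mul_of_nonneg_right (by linarith) hlogt0
      have hdivpos : (0:ℝ) < t / m := by positivity
      have b2 : Real.log t - Real.log m = Real.log (t / m) :=
        (Real.log_div (ne_of_gt ht0) (ne_of_gt hm0)).symm
      have b3 : Real.log (t / m) ≤ t / m - 1 := Real.log_le_sub_one_of_pos hdivpos
      have b4 : (m:ℝ) * (t / m - 1) = t - m := by field_simp
      have b5 : (m:ℝ) * (Real.log t - Real.log m) ≤ t - m := by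
        rw [b2]
        calc (m:ℝ) * Real.log (t/m) ≤ (m:ℝ) * (t/m - 1) :=
              mul_le_mul_of_nonneg_left b3 (le_of_lt hm0)
          _ = t - m := b4
      have : t - (m:ℝ) ≤ 1 := by linarith
      nlinarith
    rw [abs_le]
    constructor
    · linarith
    · linarith
  have hsum : Real.log (Real.Gamma t) - (t * Real.log t - t)
      = (Real.log (Real.Gamma t) - Real.log (m.factorial))
        + (Real.log (m.factorial) - ((m:ℝ) * Real.log m - m))
        + (((m:ℝ) * Real.log m - m) - (t * Real.log t - t)) := by ring
  calc |Real.log (Real.Gamma t) - (t * Real.log t - t)|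
      ≤ |Real.log (Real.Gamma t) - Real.log (m.factorial)|
        + |Real.log (m.factorial) - ((m:ℝ) * Real.log m - m)|
        + |((m:ℝ) * Real.log m - m) - (t * Real.log t - t)| := by
        rw [hsum]; exact (abs_add_le _ _).trans (by gcongr; exact abs_add_le _ _)
    _ ≤ Real.log t + (C + Real.log 2 + Real.log t) + (Real.log t + 2) := by
        linarith
    _ ≤ (C + Real.log 2 + 3) + 3 * Real.log t := by linarith [hlogt0]

lemma tendsto_stirling_D :
    Tendsto (fun t : ℝ => Real.log (Real.Gamma t) / t - Real.log t + 1) atTop (𝓝 0) := by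
  obtain ⟨K, hK⟩ := gamma_log_bound
  apply squeeze_zero_norm' (a := fun t : ℝ => (K + 3 * Real.log t)/t)
  · filter_upwards [eventually_ge_atTop (2:ℝ)] with t ht
    have ht0 : (0:ℝ) < t := by linarith
    have heq : Real.log (Real.Gamma t) / t - Real.log t + 1
        = (Real.log (Real.Gamma t) - (t * Real.log t - t)) / t := by
      field_simp
      ring
    rw [Real.norm_eq_abs, heq, abs_div, abs_of_pos ht0]
    exact div_le_div_of_nonneg_right (hK t ht) ht0.le
  · have h1 : Tendsto (fun t : ℝ => K / t) atTop (𝓝 0) :=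
      tendsto_const_nhds.div_atTop tendsto_id
    have h2 : Tendsto (fun t : ℝ => Real.log t / t) atTop (𝓝 0) := by
      simpa using Real.isLittleO_log_id_atTop.tendsto_div_nhds_zero
    have := h1.add (h2.const_mul 3)
    simp only [add_zero, mul_zero] at this
    refine this.congr fun t => ?_
    rw [add_div, mul_div_assoc]

theorem nielsen_limit (x : ℝ) (hx : 1/2 < x) :
    Filter.Tendsto (fun n : ℕ =>
      (2:ℝ) ^ (-(n:ℝ)*x/2 - (2:ℝ)^(-(n:ℝ))) * ((2:ℝ)^n * x - 1) ^ ((2:ℝ)^(-(n:ℝ)))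
        * Real.exp ((2:ℝ)^(-(n:ℝ)) * Real.log (Real.Gamma (((2:ℝ)^n * x - 1)/2))))
      Filter.atTop
      (nhds ((2 * Real.exp 1) ^ (-x/2) * x ^ (x/2))) := by
  have hx0 : (0:ℝ) < x := by linarith
  have ha_eq : ∀ n : ℕ, aN n = ((2:ℝ)⁻¹)^n := fun n => by
    rw [aN, Real.rpow_neg (by norm_num : (0:ℝ) ≤ 2), Real.rpow_natCast, inv_pow]
  have ha0 : ∀ n : ℕ, 0 < aN n := fun n => Real.rpow_pos_of_pos (by norm_num) _
  have ha : Tendsto aN atTop (𝓝 0) := by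
    refine (tendsto_pow_atTop_nhds_zero_of_lt_one (by norm_num) (by norm_num : ((2:ℝ)⁻¹) < 1)).congr
      fun n => (ha_eq n).symm
  have hb : Tendsto (fun n : ℕ => (n:ℝ) * aN n) atTop (𝓝 0) := by
    have hsum := summable_pow_mul_geometric_of_norm_lt_one (R := ℝ) 1
      (r := (2:ℝ)⁻¹) (by rw [Real.norm_eq_abs, abs_of_nonneg (by norm_num : (0:ℝ) ≤ 2⁻¹)]; norm_num)
    refine hsum.tendsto_atTop_zero.congr fun n => ?_
    rw [pow_one, ha_eq]
  have ht : Tendsto (tN x) atTop atTop := by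
    have h1 : Tendsto (fun n : ℕ => (2:ℝ)^n) atTop atTop :=
      tendsto_pow_atTop_atTop_of_one_lt one_lt_two
    have h2 := (h1.atTop_mul_const hx0)
    have h3 := tendsto_atTop_add_const_right atTop (-1 : ℝ) h2
    have h4 := h3.atTop_div_const (by norm_num : (0:ℝ) < 2)
    refine h4.congr fun n => ?_
    simp [tN]; ring_nf
  have hd : Tendsto (dN x) atTop (𝓝 0) := tendsto_stirling_D.comp ht
  have hxa : Tendsto (fun n => x - aN n) atTop (𝓝 x) := by
    simpa using tendsto_const_nhds.sub ha
  have hlogxa : Tendsto (fun n => Real.log (x - aN n)) atTop (𝓝 (Real.log x)) :=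
    ((Real.continuousAt_log (ne_of_gt hx0)).tendsto).comp hxa
  -- limit of LN
  have key : Tendsto (LN x) atTop (𝓝 (x/2 * (Real.log x - Real.log 2 - 1))) := by
    have h1 := ((hb.div_const 2).mul_const (Real.log 2)).sub (ha.mul_const (Real.log 2))
    have h2 := h1.add (ha.mul hlogxa)
    have h3 := h2.add ((hxa.div_const 2).mul
      (((hlogxa.sub_const (Real.log 2)).sub_const 1).add hd))
    have h4 : (0:ℝ) / 2 * Real.log 2 - 0 * Real.log 2 + 0 * Real.log x
        + x / 2 * (Real.log x - Real.log 2 - 1 + 0) = x / 2 * (Real.log x - Real.log 2 - 1) := by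
      ring
    rw [h4] at h3
    exact h3.congr fun n => rfl
  have hexp : Tendsto (fun n => Real.exp (LN x n)) atTop
      (𝓝 (Real.exp (x/2 * (Real.log x - Real.log 2 - 1)))) :=
    (Real.continuous_exp.tendsto _).comp key
  have htarget : (2 * Real.exp 1) ^ (-x/2) * x ^ (x/2)
      = Real.exp (x/2 * (Real.log x - Real.log 2 - 1)) := by
    rw [Real.rpow_def_of_pos (by positivity), Real.rpow_def_of_pos hx0, ← Real.exp_add,
      Real.log_mul (by norm_num) (Real.exp_ne_zero 1), Real.log_exp]
    congr 1
    ring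
  rw [htarget]
  refine Tendsto.congr' ?_ hexp
  filter_upwards [ha.eventually (eventually_lt_nhds hx0)] with n han
  -- here han : aN n < x
  have h2n : (0:ℝ) < (2:ℝ)^n := by positivity
  have hxan : 0 < x - aN n := by linarith
  have hsplit : (2:ℝ)^n * x - 1 = (2:ℝ)^n * (x - aN n) := by
    rw [ha_eq, inv_pow]
    field_simp
  have hP : (0:ℝ) < (2:ℝ)^n * x - 1 := by rw [hsplit]; positivity
  have htn0 : 0 < tN x n := by
    rw [tN]; positivity
  have hΓ : 0 < Real.Gamma (tN x n) := Real.Gamma_pos_of_pos htn0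
  have hlogP : Real.log ((2:ℝ)^n * x - 1) = (n:ℝ) * Real.log 2 + Real.log (x - aN n) := by
    rw [hsplit, Real.log_mul (ne_of_gt h2n) (ne_of_gt hxan), Real.log_pow]
  have hlogt : Real.log (tN x n) = Real.log ((2:ℝ)^n * x - 1) - Real.log 2 :=
    Real.log_div (ne_of_gt hP) (by norm_num)
  have hGam : Real.log (Real.Gamma (tN x n))
      = tN x n * (Real.log (tN x n) - 1 + dN x n) := by
    rw [dN]
    field_simp
    ring
  have hat : aN n * tN x n = (x - aN n)/2 := by
    rw [ha_eq, inv_pow, tN]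
    have h2ne : ((2:ℝ)^n) ≠ 0 := ne_of_gt h2n
    field_simp
  have hGam' : Real.log (Real.Gamma (((2:ℝ)^n * x - 1)/2))
      = tN x n * (Real.log (tN x n) - 1 + dN x n) := hGam
  have haN : (2:ℝ)^(-(n:ℝ)) = aN n := rfl
  rw [haN, Real.rpow_def_of_pos (by norm_num : (0:ℝ) < 2),
    Real.rpow_def_of_pos hP, ← Real.exp_add, ← Real.exp_add]
  congr 1
  rw [hGam', hlogt, hlogP, LN]
  linear_combination (-(((n:ℝ) * Real.log 2 + Real.log (x - aN n)) - Real.log 2 - 1 + dN x n)) * hat
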